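/- Combining the two previous results: let Ω ⊆ ℝⁿ be open, X : Ω → ℝⁿ C¹, q : Ω → ℝ continuous, and suppose there exists a C² function u > 0 on Ω with Δu + ⟨X, ∇u⟩ + qu ≤ 0. Then the Schrödinger operator −(Δ + Q) with Q = q − (1/2)div X − |X|²/4 is nonnegative, i.e., ∫_Ω (|∇f|² − Qf²) ≥ 0 for all compactly supported C¹ functions f on Ω. -/

import Mathlib

open MeasureTheory RealInnerProductSpace

/-- The Euclidean divergence of a vector field. -/
noncomputable def ediv {n : ℕ}
    (Y : EuclideanSpace ℝ (Fin n) → EuclideanSpace ℝ (Fin n))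
    (x : EuclideanSpace ℝ (Fin n)) : ℝ :=
  ∑ i, fderiv ℝ Y x (EuclideanSpace.single i 1) i

/-- The Euclidean Laplacian: divergence of the gradient. -/
noncomputable def elap {n : ℕ} (u : EuclideanSpace ℝ (Fin n) → ℝ)
    (x : EuclideanSpace ℝ (Fin n)) : ℝ :=
  ediv (fun y => gradient u y) x

open Set

lemma inner_grad {n : ℕ} (h : EuclideanSpace ℝ (Fin n) → ℝ) (x v : EuclideanSpace ℝ (Fin n)) :
    ⟪gradient h x, v⟫ = fderiv ℝ h x v := by
  simp [gradient, InnerProductSpace.toDual_symm_apply]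

lemma grad_coord {n : ℕ} (h : EuclideanSpace ℝ (Fin n) → ℝ) (x : EuclideanSpace ℝ (Fin n))
    (i : Fin n) : gradient h x i = fderiv ℝ h x (EuclideanSpace.single i 1) := by
  rw [← inner_grad]
  have := EuclideanSpace.inner_single_right (𝕜 := ℝ) i 1 (gradient h x)
  simpa using this.symm

lemma sum_fderiv_mul {n : ℕ} (h : EuclideanSpace ℝ (Fin n) → ℝ) (x Y : EuclideanSpace ℝ (Fin n)) :
    ∑ i, fderiv ℝ h x (EuclideanSpace.single i 1) * Y i = ⟪gradient h x, Y⟫ := by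
  rw [PiLp.inner_apply]
  refine Finset.sum_congr rfl fun i _ => ?_
  rw [← grad_coord]
  simp [mul_comm]

lemma grad_zero_off {n : ℕ} (h : EuclideanSpace ℝ (Fin n) → ℝ) (x : EuclideanSpace ℝ (Fin n))
    (hx : x ∉ tsupport h) : gradient h x = 0 := by
  have : fderiv ℝ h x = 0 := by
    by_contra hne
    exact hx (support_fderiv_subset ℝ (by simpa [Function.mem_support] using hne))
  simp [gradient, this]

lemma ediv_contOn {n : ℕ} {Ω : Set (EuclideanSpace ℝ (Fin n))} (hΩ : IsOpen Ω)
    {Z : EuclideanSpace ℝ (Fin n) → EuclideanSpace ℝ (Fin n)} (hZ : ContDiffOn ℝ 1 Z Ω) :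
    ContinuousOn (ediv Z) Ω := by
  have hfd : ContinuousOn (fderiv ℝ Z) Ω := hZ.continuousOn_fderiv_of_isOpen hΩ le_rfl
  apply continuousOn_finset_sum
  intro i _
  exact (EuclideanSpace.proj i).continuous.comp_continuousOn
    (hfd.clm_apply continuousOn_const)

lemma divergence_int_zero {n : ℕ} (V : EuclideanSpace ℝ (Fin n) → EuclideanSpace ℝ (Fin n))
    (V' : EuclideanSpace ℝ (Fin n) → (EuclideanSpace ℝ (Fin n) →L[ℝ] EuclideanSpace ℝ (Fin n)))
    (K : Set (EuclideanSpace ℝ (Fin n))) (hK : IsCompact K)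
    (hd : ∀ x, HasFDerivAt V (V' x) x)
    (hV0 : ∀ x ∉ K, V x = 0) (hV'0 : ∀ x ∉ K, V' x = 0)
    (hcont : Continuous fun x => ∑ i, V' x (EuclideanSpace.single i 1) i) :
    ∫ x, ∑ i, V' x (EuclideanSpace.single i 1) i = 0 := by
  cases n with
  | zero => simp
  | succ m =>
    set e := PiLp.continuousLinearEquiv 2 ℝ (fun _ : Fin (m+1) => ℝ) with he
    set W : (Fin (m+1) → ℝ) → (Fin (m+1) → ℝ) := fun x => e (V (e.symm x)) with hW
    set W' : (Fin (m+1) → ℝ) → ((Fin (m+1) → ℝ) →L[ℝ] (Fin (m+1) → ℝ)) :=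
      fun x => (e : EuclideanSpace ℝ (Fin (m+1)) →L[ℝ] (Fin (m+1) → ℝ)).comp
        ((V' (e.symm x)).comp (e.symm : (Fin (m+1) → ℝ) →L[ℝ] EuclideanSpace ℝ (Fin (m+1)))) with hW'
    have hdW : ∀ x, HasFDerivAt W (W' x) x := fun x =>
      (e.toContinuousLinearMap.hasFDerivAt).comp _ ((hd _).comp x e.symm.hasFDerivAt)
    have hdivW : ∀ x, (∑ i, W' x (Pi.single i 1) i)
        = ∑ i, V' (e.symm x) (EuclideanSpace.single i 1) i := fun x => rfl
    obtain ⟨R, hR⟩ := ((hK.image e.continuous).isBounded).subset_closedBall (0 : Fin (m+1) → ℝ)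
    set S := max R 0 with hS
    have hRS : Metric.closedBall (0 : Fin (m+1) → ℝ) R ⊆ Metric.closedBall 0 S :=
      Metric.closedBall_subset_closedBall (le_max_left _ _)
    have hSnn : (0:ℝ) ≤ S := le_max_right _ _
    have hOut : ∀ y : Fin (m+1) → ℝ, S < ‖y‖ → V (e.symm y) = 0 ∧ V' (e.symm y) = 0 := by
      intro y hy
      have : e.symm y ∉ K := by
        intro hmem
        have : y ∈ Metric.closedBall (0 : Fin (m+1) → ℝ) S := by
          refine hRS (hR ?_)
          exact ⟨e.symm y, hmem, by simp⟩
        rw [Metric.mem_closedBall, dist_zero_right] at this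
        exact absurd this (not_le.2 hy)
      exact ⟨hV0 _ this, hV'0 _ this⟩
    set a : Fin (m+1) → ℝ := fun _ => -(S+1) with ha
    set b : Fin (m+1) → ℝ := fun _ => (S+1) with hb
    have hle : a ≤ b := fun i => by simp [ha, hb]; linarith
    have hWcont : Continuous W := by
      rw [continuous_iff_continuousAt]; exact fun x => (hdW x).continuousAt
    have hdivcont : Continuous fun y : Fin (m+1) → ℝ =>
        ∑ i, W' y (Pi.single i 1) i := by
      have : (fun y : Fin (m+1) → ℝ => ∑ i, W' y (Pi.single i 1) i)
          = (fun x => ∑ i, V' x (EuclideanSpace.single i 1) i) ∘ (e.symm : _ → _) := by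
        funext y; exact hdivW y
      rw [this]
      exact hcont.comp e.symm.continuous
    have key := integral_divergence_of_hasFDerivAt_off_countable a b hle W W'
      ∅ countable_empty hWcont.continuousOn
      (fun x _ => hdW x) (hdivcont.integrableOn_Icc)
    have hface : ∀ (i : Fin (m+1)) (c : ℝ), S < |c| →
        ∀ x : Fin m → ℝ, W (i.insertNth c x : Fin (m+1) → ℝ) = 0 := by
      intro i c hc x
      have h1 : S < ‖(i.insertNth c x : Fin (m+1) → ℝ)‖ := by
        have := norm_le_pi_norm (i.insertNth c x : Fin (m+1) → ℝ) i
        simp only [Fin.insertNth_apply_same] at this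
        calc S < |c| := hc
        _ = ‖c‖ := rfl
        _ ≤ _ := this
      simp only [hW]
      rw [(hOut _ h1).1]
      simp
    rw [show (0:ℝ) = ∫ x, ∑ i, W' x (Pi.single i 1) i from ?_]
    · exact ((MeasurePreserving.symm _
        (EuclideanSpace.volume_preserving_symm_measurableEquiv_toLp (Fin (m+1)))).integral_comp
        (MeasurableEquiv.toLp 2 (Fin (m+1) → ℝ)).measurableEmbedding
        (fun x => ∑ i, V' x (EuclideanSpace.single i 1) i)).symm
    · have hIcc : ∫ x, ∑ i, W' x (Pi.single i 1) i
          = ∫ x in Icc a b, ∑ i, W' x (Pi.single i 1) i := by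
        refine (setIntegral_eq_integral_of_forall_compl_eq_zero ?_).symm
        intro y hy
        have : S < ‖y‖ := by
          by_contra h
          push_neg at h
          refine hy ⟨fun i => ?_, fun i => ?_⟩
          · have hni := norm_le_pi_norm y i
            simp only [ha]; have := (abs_le.1 (hni.trans h)).1; linarith
          · have hni := norm_le_pi_norm y i
            simp only [hb]; have := (abs_le.1 (hni.trans h)).2; linarith
        rw [hdivW, (hOut _ this).2]
        simp
      rw [hIcc, key]
      refine (Finset.sum_eq_zero ?_).symm
      intro i _
      have h₁ : ∀ x : Fin m → ℝ, W (i.insertNth (b i) x : Fin (m+1) → ℝ) = 0 := by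
        intro x; refine hface i _ ?_ x
        simp only [hb]; rw [abs_of_nonneg (by linarith)]; linarith
      have h₂ : ∀ x : Fin m → ℝ, W (i.insertNth (a i) x : Fin (m+1) → ℝ) = 0 := by
        intro x; refine hface i _ ?_ x
        simp only [ha]; rw [abs_of_nonpos (by linarith)]; linarith
      simp only [h₁, h₂]
      simp

lemma ibp_cont {n : ℕ} (Ω : Set (EuclideanSpace ℝ (Fin n))) (hΩ : IsOpen Ω)
    (Z : EuclideanSpace ℝ (Fin n) → EuclideanSpace ℝ (Fin n)) (hZ : ContDiffOn ℝ 1 Z Ω)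
    (h : EuclideanSpace ℝ (Fin n) → ℝ) (hh : ContDiff ℝ 1 h)
    (hhs : tsupport h ⊆ Ω) :
    Continuous fun x => ⟪gradient h x, Z x⟫ + h x * ediv Z x := by
  have hnot : ∀ x ∉ Ω, x ∉ tsupport h := fun x hx hmem => hx (hhs hmem)
  have hgc : Continuous (gradient h) := by
    have : Continuous (fderiv ℝ h) := hh.continuous_fderiv one_ne_zero
    exact (LinearIsometryEquiv.continuous _).comp this
  rw [continuous_iff_continuousAt]
  intro x
  by_cases hx : x ∈ Ω
  · have hcΩ : ContinuousOn (fun x => ⟪gradient h x, Z x⟫ + h x * ediv Z x) Ω := by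
      exact ((hgc.continuousOn.inner hZ.continuousOn)).add
        ((hh.continuous.continuousOn).mul (ediv_contOn hΩ hZ))
    exact hcΩ.continuousAt (hΩ.mem_nhds hx)
  · have hx' := hnot x hx
    have hnb : (tsupport h)ᶜ ∈ nhds x := (isClosed_tsupport h).isOpen_compl.mem_nhds hx'
    have hev : (fun x => ⟪gradient h x, Z x⟫ + h x * ediv Z x) =ᶠ[nhds x] (fun _ => 0) := by
      filter_upwards [hnb] with y hy
      rw [grad_zero_off h y hy, image_eq_zero_of_notMem_tsupport hy]
      simp
    exact ContinuousAt.congr (continuousAt_const) hev.symm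

lemma ibp {n : ℕ} (Ω : Set (EuclideanSpace ℝ (Fin n))) (hΩ : IsOpen Ω)
    (Z : EuclideanSpace ℝ (Fin n) → EuclideanSpace ℝ (Fin n)) (hZ : ContDiffOn ℝ 1 Z Ω)
    (h : EuclideanSpace ℝ (Fin n) → ℝ) (hh : ContDiff ℝ 1 h)
    (hhc : HasCompactSupport h) (hhs : tsupport h ⊆ Ω) :
    ∫ x, (⟪gradient h x, Z x⟫ + h x * ediv Z x) = 0 := by
  classical
  set V : EuclideanSpace ℝ (Fin n) → EuclideanSpace ℝ (Fin n) := fun x => h x • Z x with hV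
  set V' : EuclideanSpace ℝ (Fin n) → (EuclideanSpace ℝ (Fin n) →L[ℝ] EuclideanSpace ℝ (Fin n)) :=
    fun x => if x ∈ Ω then h x • fderiv ℝ Z x + (fderiv ℝ h x).smulRight (Z x) else 0 with hV'
  have hV'pos : ∀ x ∈ Ω, V' x = h x • fderiv ℝ Z x + (fderiv ℝ h x).smulRight (Z x) :=
    fun x hx => if_pos hx
  have hV'neg : ∀ x ∉ Ω, V' x = 0 := fun x hx => if_neg hx
  have hZdiff : ∀ x ∈ Ω, DifferentiableAt ℝ Z x := fun x hx =>
    ((hZ.differentiableOn one_ne_zero).differentiableAt (hΩ.mem_nhds hx))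
  have hnot : ∀ x ∉ Ω, x ∉ tsupport h := fun x hx hmem => hx (hhs hmem)
  have hd : ∀ x, HasFDerivAt V (V' x) x := by
    intro x
    by_cases hx : x ∈ Ω
    · rw [hV'pos x hx]
      exact ((hh.differentiable one_ne_zero x).hasFDerivAt).smul (hZdiff x hx).hasFDerivAt
    · have hx' := hnot x hx
      have hnb : (tsupport h)ᶜ ∈ nhds x := (isClosed_tsupport h).isOpen_compl.mem_nhds hx'
      have hev : V =ᶠ[nhds x] (fun _ => 0) := by
        filter_upwards [hnb] with y hy
        simp [hV, image_eq_zero_of_notMem_tsupport hy]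
      rw [hV'neg x hx]
      exact (hasFDerivAt_const (0 : EuclideanSpace ℝ (Fin n)) x).congr_of_eventuallyEq hev
  have hV'0 : ∀ x ∉ tsupport h, V' x = 0 := by
    intro x hx
    by_cases hxx : x ∈ Ω
    · rw [hV'pos x hxx, image_eq_zero_of_notMem_tsupport hx]
      have : fderiv ℝ h x = 0 := by
        by_contra hne
        exact hx (support_fderiv_subset ℝ (by simpa [Function.mem_support] using hne))
      rw [this]
      ext v
      simp
    · exact hV'neg x hxx
  have claim : ∀ x, ⟪gradient h x, Z x⟫ + h x * ediv Z x
      = ∑ i, V' x (EuclideanSpace.single i 1) i := by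
    intro x
    by_cases hx : x ∈ Ω
    · rw [hV'pos x hx]
      simp only [ContinuousLinearMap.add_apply, ContinuousLinearMap.coe_smul',
        Pi.smul_apply, ContinuousLinearMap.smulRight_apply]
      have : ∀ i : Fin n, ((h x • fderiv ℝ Z x (EuclideanSpace.single i 1)
          + fderiv ℝ h x (EuclideanSpace.single i 1) • Z x) : EuclideanSpace ℝ (Fin n)) i
          = h x * fderiv ℝ Z x (EuclideanSpace.single i 1) i
            + fderiv ℝ h x (EuclideanSpace.single i 1) * Z x i := by
        intro i; rfl
      rw [Finset.sum_congr rfl fun i _ => this i, Finset.sum_add_distrib, ← Finset.mul_sum,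
        sum_fderiv_mul, ediv]
      ring
    · have hx' := hnot x hx
      rw [grad_zero_off h x hx', image_eq_zero_of_notMem_tsupport hx', hV'neg x hx]
      simp
  calc ∫ x, (⟪gradient h x, Z x⟫ + h x * ediv Z x)
      = ∫ x, ∑ i, V' x (EuclideanSpace.single i 1) i := by
        congr 1; funext x; exact claim x
    _ = 0 := by
        refine divergence_int_zero V V' (tsupport h) hhc hd ?_ hV'0 ?_
        · intro x hx; simp [hV, image_eq_zero_of_notMem_tsupport hx]
        · have : (fun x => ∑ i, V' x (EuclideanSpace.single i 1) i)
              = fun x => ⟪gradient h x, Z x⟫ + h x * ediv Z x := by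
            funext x; exact (claim x).symm
          rw [this]; exact ibp_cont Ω hΩ Z hZ h hh hhs

theorem stmt_10 {n : ℕ} (Ω : Set (EuclideanSpace ℝ (Fin n))) (hΩ : IsOpen Ω)
    (X : EuclideanSpace ℝ (Fin n) → EuclideanSpace ℝ (Fin n))
    (hX : ContDiffOn ℝ 1 X Ω) (q : EuclideanSpace ℝ (Fin n) → ℝ)
    (hq : ContinuousOn q Ω)
    (u : EuclideanSpace ℝ (Fin n) → ℝ) (hu : ContDiffOn ℝ 2 u Ω)
    (hupos : ∀ x ∈ Ω, 0 < u x)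
    (hsuper : ∀ x ∈ Ω, elap u x + ⟪X x, gradient u x⟫ + q x * u x ≤ 0)
    (Q : EuclideanSpace ℝ (Fin n) → ℝ)
    (hQdef : ∀ x, Q x = q x - (1 / 2) * ediv X x - ‖X x‖ ^ 2 / 4) :
    ∀ f : EuclideanSpace ℝ (Fin n) → ℝ, ContDiff ℝ 1 f →
      HasCompactSupport f → tsupport f ⊆ Ω →
      0 ≤ ∫ x in Ω, (‖gradient f x‖ ^ 2 - Q x * (f x) ^ 2) := by
  intro f hf hfc hfs
  classical
  have hnotf : ∀ x ∉ Ω, x ∉ tsupport f := fun x hx hmem => hx (hfs hmem)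
  set W : EuclideanSpace ℝ (Fin n) → EuclideanSpace ℝ (Fin n) :=
    fun x => (u x)⁻¹ • gradient u x + (2⁻¹ : ℝ) • X x with hWdef
  have hgradu : ContDiffOn ℝ 1 (fun y => gradient u y) Ω := by
    have h1 : ContDiffOn ℝ 1 (fderiv ℝ u) Ω := hu.fderiv_of_isOpen hΩ (by norm_num)
    have h2 : ContDiff ℝ 1
        ⇑(InnerProductSpace.toDual ℝ (EuclideanSpace ℝ (Fin n))).symm :=
      (InnerProductSpace.toDual ℝ (EuclideanSpace ℝ (Fin n))).symm.contDiff
    exact h2.comp_contDiffOn h1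
  have hWcd : ContDiffOn ℝ 1 W Ω := by
    have huinv : ContDiffOn ℝ 1 (fun y => (u y)⁻¹) Ω :=
      (hu.of_le (by norm_num)).inv (fun x hx => (hupos x hx).ne')
    exact (huinv.smul hgradu).add (hX.const_smul (2⁻¹ : ℝ))
  -- the squared test function
  set g : EuclideanSpace ℝ (Fin n) → ℝ := fun x => f x ^ 2 with hgdef
  have hg : ContDiff ℝ 1 g := hf.pow 2
  have hsuppg : Function.support g ⊆ Function.support f := by
    intro x hx
    simp only [Function.mem_support, hgdef] at hx ⊢
    intro h0; exact hx (by rw [h0]; ring)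
  have hgc : HasCompactSupport g := hfc.mono hsuppg
  have htg : tsupport g ⊆ tsupport f := closure_mono hsuppg
  have hgs : tsupport g ⊆ Ω := htg.trans hfs
  have hIBP := ibp Ω hΩ W hWcd g hg hgc hgs
  have hDcont := ibp_cont Ω hΩ W hWcd g hg hgs
  set D : EuclideanSpace ℝ (Fin n) → ℝ :=
    fun x => ⟪gradient g x, W x⟫ + g x * ediv W x with hDdef
  -- gradient of g
  have hgradg : ∀ x, gradient g x = (2 * f x) • gradient f x := by
    intro x
    have hfx : HasFDerivAt f (fderiv ℝ f x) x := (hf.differentiable one_ne_zero x).hasFDerivAt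
    have h1 : HasFDerivAt (fun y => f y * f y)
        (f x • fderiv ℝ f x + f x • fderiv ℝ f x) x := hfx.mul hfx
    have h2 : HasFDerivAt g (f x • fderiv ℝ f x + f x • fderiv ℝ f x) x := by
      have : g = fun y => f y * f y := by funext y; rw [hgdef]; ring
      rw [this]; exact h1
    have h3 : fderiv ℝ g x = f x • fderiv ℝ f x + f x • fderiv ℝ f x := h2.fderiv
    have h4 : gradient g x = f x • gradient f x + f x • gradient f x := by
      show (InnerProductSpace.toDual ℝ _).symm (fderiv ℝ g x) = _
      rw [h3, map_add, LinearIsometryEquiv.map_smul]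
      rfl
    rw [h4, two_mul, add_smul]
  -- pointwise identity
  set A : EuclideanSpace ℝ (Fin n) → ℝ :=
    fun x => ‖gradient f x - f x • W x‖ ^ 2 with hAdef
  set C : EuclideanSpace ℝ (Fin n) → ℝ :=
    fun x => f x ^ 2 * (-Q x - ediv W x - ‖W x‖ ^ 2) with hCdef
  set B : EuclideanSpace ℝ (Fin n) → ℝ :=
    fun x => ‖gradient f x‖ ^ 2 - Q x * f x ^ 2 with hBdef
  have hBD : ∀ x, B x - D x = A x + C x := by
    intro x
    have e1 : A x = ‖gradient f x‖ ^ 2 - 2 * (f x * ⟪gradient f x, W x⟫)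
        + f x ^ 2 * ‖W x‖ ^ 2 := by
      simp only [hAdef]
      rw [norm_sub_sq_real, real_inner_smul_right, norm_smul]
      rw [mul_pow]
      rw [Real.norm_eq_abs, sq_abs]
    have e2 : D x = 2 * f x * ⟪gradient f x, W x⟫ + f x ^ 2 * ediv W x := by
      simp only [hDdef]
      rw [hgradg x, real_inner_smul_left]
      try simp only [hgdef]
      try ring
    rw [e1, e2]
    simp only [hBdef, hCdef]
    ring
  -- ediv W on Ω
  have hedivW : ∀ x ∈ Ω, ediv W x
      = elap u x * (u x)⁻¹ - (u x ^ 2)⁻¹ * ‖gradient u x‖ ^ 2 + 2⁻¹ * ediv X x := by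
    intro x hx
    have hu0 : u x ≠ 0 := (hupos x hx).ne'
    have hud : DifferentiableAt ℝ u x :=
      ((hu.differentiableOn (by norm_num)).differentiableAt (hΩ.mem_nhds hx))
    have hgu : HasFDerivAt (fun y => gradient u y)
        (fderiv ℝ (fun y => gradient u y) x) x :=
      ((hgradu.differentiableOn one_ne_zero).differentiableAt (hΩ.mem_nhds hx)).hasFDerivAt
    have hui : HasFDerivAt (fun y => (u y)⁻¹) ((-(u x ^ 2)⁻¹) • fderiv ℝ u x) x := by
      have := (hasDerivAt_inv hu0).comp_hasFDerivAt x hud.hasFDerivAt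
      simpa [Function.comp_def] using this
    have h1 : HasFDerivAt (fun y => (u y)⁻¹ • gradient u y)
        ((u x)⁻¹ • fderiv ℝ (fun y => gradient u y) x
          + ((-(u x ^ 2)⁻¹) • fderiv ℝ u x).smulRight (gradient u x)) x := hui.smul hgu
    have hXd : HasFDerivAt X (fderiv ℝ X x) x :=
      ((hX.differentiableOn one_ne_zero).differentiableAt (hΩ.mem_nhds hx)).hasFDerivAt
    have h2 : HasFDerivAt W
        (((u x)⁻¹ • fderiv ℝ (fun y => gradient u y) x
          + ((-(u x ^ 2)⁻¹) • fderiv ℝ u x).smulRight (gradient u x))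
          + (2⁻¹:ℝ) • fderiv ℝ X x) x := h1.add (hXd.const_smul (2⁻¹:ℝ))
    have hsum : ediv W x = ∑ i, ((u x)⁻¹ * (fderiv ℝ (fun y => gradient u y) x
          (EuclideanSpace.single i 1) i)
        + (-(u x ^ 2)⁻¹) * (fderiv ℝ u x (EuclideanSpace.single i 1) * gradient u x i)
        + 2⁻¹ * (fderiv ℝ X x (EuclideanSpace.single i 1) i)) := by
      rw [show ediv W x = ∑ i, fderiv ℝ W x (EuclideanSpace.single i 1) i from rfl, h2.fderiv]
      refine Finset.sum_congr rfl fun i _ => ?_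
      simp only [ContinuousLinearMap.add_apply, ContinuousLinearMap.coe_smul',
        Pi.smul_apply, ContinuousLinearMap.smulRight_apply, PiLp.add_apply,
        PiLp.smul_apply, smul_eq_mul]
      ring
    rw [hsum]
    rw [Finset.sum_add_distrib, Finset.sum_add_distrib, ← Finset.mul_sum, ← Finset.mul_sum,
      ← Finset.mul_sum, sum_fderiv_mul, real_inner_self_eq_norm_sq]
    have helap : elap u x = ∑ i, fderiv ℝ (fun y => gradient u y) x
        (EuclideanSpace.single i 1) i := rfl
    have hedivX : ediv X x = ∑ i, fderiv ℝ X x (EuclideanSpace.single i 1) i := rfl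
    rw [← helap, ← hedivX]
    ring
  -- nonnegativity of the integrand
  have hApt : ∀ x, 0 ≤ A x := fun x => sq_nonneg _
  have hCpt : ∀ x, 0 ≤ C x := by
    intro x
    by_cases hx : x ∈ Ω
    · have hu0 : 0 < u x := hupos x hx
      have hWnorm : ‖W x‖ ^ 2 = (u x ^ 2)⁻¹ * ‖gradient u x‖ ^ 2
          + (u x)⁻¹ * ⟪gradient u x, X x⟫ + 4⁻¹ * ‖X x‖ ^ 2 := by
        simp only [hWdef]
        rw [norm_add_sq_real, real_inner_smul_left, real_inner_smul_right, norm_smul, norm_smul]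
        rw [mul_pow, mul_pow, Real.norm_eq_abs, Real.norm_eq_abs, sq_abs, sq_abs]
        rw [← inv_pow]
        ring_nf
      have hkey : 0 ≤ -Q x - ediv W x - ‖W x‖ ^ 2 := by
        rw [hQdef x, hedivW x hx, hWnorm]
        have hiu : ⟪gradient u x, X x⟫ = ⟪X x, gradient u x⟫ := real_inner_comm _ _
        rw [hiu]
        have hsup := hsuper x hx
        have hfin : -(q x - 1 / 2 * ediv X x - ‖X x‖ ^ 2 / 4)
            - (elap u x * (u x)⁻¹ - (u x ^ 2)⁻¹ * ‖gradient u x‖ ^ 2 + 2⁻¹ * ediv X x)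
            - ((u x ^ 2)⁻¹ * ‖gradient u x‖ ^ 2 + (u x)⁻¹ * ⟪X x, gradient u x⟫
              + 4⁻¹ * ‖X x‖ ^ 2)
            = (-(elap u x + ⟪X x, gradient u x⟫ + q x * u x)) * (u x)⁻¹ := by
          field_simp
          ring
        rw [hfin]
        exact mul_nonneg (by linarith) (inv_nonneg.2 hu0.le)
      simp only [hCdef]
      exact mul_nonneg (sq_nonneg _) hkey
    · have hx' := hnotf x hx
      simp only [hCdef, image_eq_zero_of_notMem_tsupport hx']
      simp
  -- vanishing off the support
  have hB0 : ∀ x ∉ tsupport f, B x = 0 := by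
    intro x hx
    simp only [hBdef, grad_zero_off f x hx, image_eq_zero_of_notMem_tsupport hx]
    simp
  have hD0 : ∀ x ∉ tsupport f, D x = 0 := by
    intro x hx
    have hxg : x ∉ tsupport g := fun hm => hx (htg hm)
    simp only [hDdef, grad_zero_off g x hxg, image_eq_zero_of_notMem_tsupport hxg]
    simp
  -- continuity and integrability
  have hgradfc : Continuous (gradient f) := by
    have : Continuous (fderiv ℝ f) := hf.continuous_fderiv one_ne_zero
    exact (LinearIsometryEquiv.continuous _).comp this
  have hBcontΩ : ContinuousOn B Ω := by
    have hQc : ContinuousOn Q Ω := by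
      have hQeq : Q = fun x => q x - (1 / 2) * ediv X x - ‖X x‖ ^ 2 / 4 := funext hQdef
      rw [hQeq]
      exact (hq.sub (continuousOn_const.mul (ediv_contOn hΩ hX))).sub
        ((hX.continuousOn.norm.pow 2).div_const _)
    exact ((hgradfc.norm.pow 2).continuousOn).sub
      (hQc.mul ((hf.continuous.pow 2).continuousOn))
  have hBDcont : Continuous fun x => B x - D x := by
    rw [continuous_iff_continuousAt]
    intro x
    by_cases hx : x ∈ Ω
    · exact ((hBcontΩ.sub hDcont.continuousOn).continuousAt (hΩ.mem_nhds hx))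
    · have hx' := hnotf x hx
      have hnb : (tsupport f)ᶜ ∈ nhds x := (isClosed_tsupport f).isOpen_compl.mem_nhds hx'
      have hev : (fun x => B x - D x) =ᶠ[nhds x] (fun _ => 0) := by
        filter_upwards [hnb] with y hy
        rw [hB0 y hy, hD0 y hy]; ring
      exact ContinuousAt.congr (continuousAt_const) hev.symm
  have hBDsupp : HasCompactSupport fun x => B x - D x := by
    refine hfc.mono' ?_
    intro x hx
    by_contra hxx
    rw [Function.mem_support] at hx
    exact hx (by rw [hB0 x hxx, hD0 x hxx]; ring)
  have hBDint : Integrable fun x => B x - D x :=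
    hBDcont.integrable_of_hasCompactSupport hBDsupp
  have hDsupp : HasCompactSupport D := by
    refine hfc.mono' ?_
    intro x hx
    by_contra hxx
    rw [Function.mem_support] at hx
    exact hx (hD0 x hxx)
  have hDint : Integrable D := hDcont.integrable_of_hasCompactSupport hDsupp
  -- final chain
  have e1 : ∫ x in Ω, (‖gradient f x‖ ^ 2 - Q x * (f x) ^ 2) = ∫ x, B x :=
    setIntegral_eq_integral_of_forall_compl_eq_zero
      (fun x hx => hB0 x (hnotf x hx))
  have e2 : ∫ x, B x = ∫ x, ((B x - D x) + D x) := by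
    congr 1; funext x; ring
  have e3 : ∫ x, ((B x - D x) + D x) = (∫ x, (B x - D x)) + ∫ x, D x :=
    integral_add hBDint hDint
  have e4 : ∫ x, D x = 0 := hIBP
  have e5 : ∫ x, (B x - D x) = ∫ x, (A x + C x) := by
    congr 1; funext x; exact hBD x
  have e6 : 0 ≤ ∫ x, (A x + C x) :=
    integral_nonneg fun x => add_nonneg (hApt x) (hCpt x)
  rw [e1, e2, e3, e4, e5, add_zero]
  exact e6
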